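/- Let b : ℝ≥0 → (0,∞) be nonincreasing on [ρ,∞) for some ρ > 0, integrable against s^{d−1}, long-tailed, and set c(x) = ∫_{Δ(x)} b(|y|) dy where Δ(x) = {y ∈ ℝ^d : y_j ≥ x_j for all j}. Then for every h ∈ ℝ_+^d, c(x+h)/c(x) → 1 as max_j x_j → ∞. -/

import Mathlib

open MeasureTheory Filter

theorem octant_integral_long_tailed (d : ℕ) (hd : 0 < d) (b : ℝ → ℝ) (ρ : ℝ) (hρ : 0 < ρ)
    (hb_pos : ∀ s, 0 ≤ s → 0 < b s)
    (hb_anti : AntitoneOn b (Set.Ici ρ))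
    (hb_int : Integrable (fun y : EuclideanSpace ℝ (Fin d) => b ‖y‖))
    (hb_lt : ∀ τ : ℝ, 0 ≤ τ →
      Tendsto (fun s => b (s + τ) / b s) atTop (nhds 1)) :
    ∀ h : EuclideanSpace ℝ (Fin d), (∀ j, 0 ≤ h j) →
      ∀ ε > (0 : ℝ), ∃ R : ℝ, ∀ x : EuclideanSpace ℝ (Fin d), (∃ j, R ≤ x j) →
        |(∫ y in {y : EuclideanSpace ℝ (Fin d) | ∀ j, (x + h) j ≤ y j}, b ‖y‖) /
          (∫ y in {y : EuclideanSpace ℝ (Fin d) | ∀ j, x j ≤ y j}, b ‖y‖) - 1| ≤ ε := by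
  intro h hh ε hε
  set τ : ℝ := ‖h‖ with hτdef
  have hτ : 0 ≤ τ := norm_nonneg h
  -- eventual lower bound: b (s + τ) ≥ (1 - ε) * b s
  have hlow : ∀ᶠ s in atTop, 1 - ε < b (s + τ) / b s :=
    (hb_lt τ hτ).eventually (eventually_gt_nhds (by linarith))
  obtain ⟨R₁, hR₁⟩ := eventually_atTop.mp hlow
  -- eventual upper bound: b u ≤ (1 + ε) * b (u + τ)
  have hup : ∀ᶠ u in atTop, 1 / (1 + ε) < b (u + τ) / b u :=
    (hb_lt τ hτ).eventually (eventually_gt_nhds (by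
      rw [div_lt_one (by linarith)]; linarith))
  obtain ⟨R₂, hR₂⟩ := eventually_atTop.mp hup
  refine ⟨max (max (R₁ + 1) (R₂ + τ + 1)) (ρ + τ + 1), ?_⟩
  intro x hx
  obtain ⟨j, hj⟩ := hx
  set R : ℝ := max (max (R₁ + 1) (R₂ + τ + 1)) (ρ + τ + 1) with hRdef
  have hRρ : ρ + τ + 1 ≤ R := le_max_right _ _
  have hRR₁ : R₁ ≤ R := le_trans (by linarith [le_max_left (R₁+1) (R₂+τ+1)]) (le_max_left _ _)
  have hRR₂ : R₂ + τ ≤ R := le_trans (by linarith [le_max_right (R₁+1) (R₂+τ+1)]) (le_max_left _ _)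
  have hR0 : (0:ℝ) < R := by linarith
  set S : Set (EuclideanSpace ℝ (Fin d)) := {y | ∀ j, x j ≤ y j} with hSdef
  set S' : Set (EuclideanSpace ℝ (Fin d)) := {y | ∀ j, (x + h) j ≤ y j} with hS'def
  -- norm lower bound on S
  have hnorm : ∀ y ∈ S, R ≤ ‖y‖ := by
    intro y hy
    have h1 : |y j| ≤ ‖y‖ := by
      rw [EuclideanSpace.norm_eq, ← Real.sqrt_sq_eq_abs]
      apply Real.sqrt_le_sqrt
      simpa using Finset.single_le_sum (f := fun i => y i ^ 2)
        (fun i _ => sq_nonneg _) (Finset.mem_univ j)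
    calc R ≤ x j := hj
      _ ≤ y j := hy j
      _ ≤ |y j| := le_abs_self _
      _ ≤ ‖y‖ := h1
  -- measurability of S
  have hSmeas : MeasurableSet S := by
    have : S = ⋂ j, {y : EuclideanSpace ℝ (Fin d) | x j ≤ (EuclideanSpace.proj j) y} := by
      ext y
      simp only [hSdef, Set.mem_setOf_eq, Set.mem_iInter]
      rfl
    rw [this]
    exact (isClosed_iInter (fun j =>
      isClosed_le continuous_const ((EuclideanSpace.proj j).continuous))).measurableSet
  -- translation: numerator equals ∫ over S of b ‖y + h‖
  have hpre : (fun y : EuclideanSpace ℝ (Fin d) => y + h) ⁻¹' S' = S := by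
    ext y
    simp only [hS'def, hSdef, Set.mem_preimage, Set.mem_setOf_eq]
    constructor
    · intro hy k; have := hy k
      have : x k + h k ≤ y k + h k := this
      linarith
    · intro hy k
      have : x k + h k ≤ y k + h k := by linarith [hy k]
      exact this
  have htrans : (∫ y in S, b ‖y + h‖) = ∫ y in S', b ‖y‖ := by
    rw [← hpre]
    exact (measurePreserving_add_right volume h).setIntegral_preimage_emb
      (MeasurableEquiv.addRight h).measurableEmbedding (fun y => b ‖y‖) S'
  -- pointwise bounds on S
  have hpt : ∀ y ∈ S, (1 - ε) * b ‖y‖ ≤ b ‖y + h‖ ∧ b ‖y + h‖ ≤ (1 + ε) * b ‖y‖ := by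
    intro y hy
    set s : ℝ := ‖y‖ with hsdef
    have hsR : R ≤ s := hnorm y hy
    have hs0 : (0:ℝ) ≤ s := le_trans hR0.le hsR
    have hbs : 0 < b s := hb_pos s hs0
    have hub : ‖y + h‖ ≤ s + τ := norm_add_le y h
    have hlb : s - τ ≤ ‖y + h‖ := by
      have h1 := norm_sub_norm_le y (y + h)
      have h2 : ‖y - (y + h)‖ = ‖h‖ := by simp
      rw [h2] at h1
      linarith
    have hyhρ : ρ ≤ ‖y + h‖ := by linarith
    have hsτρ : ρ ≤ s - τ := by linarith
    constructor
    · -- lower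
      have h1 : b (s + τ) ≤ b ‖y + h‖ :=
        hb_anti (Set.mem_Ici.mpr hyhρ) (Set.mem_Ici.mpr (by linarith)) hub
      have h2 : 1 - ε < b (s + τ) / b s := hR₁ s (by linarith)
      have h3 : (1 - ε) * b s < b (s + τ) := (lt_div_iff₀ hbs).mp h2
      linarith
    · -- upper
      have h1 : b ‖y + h‖ ≤ b (s - τ) :=
        hb_anti (Set.mem_Ici.mpr hsτρ) (Set.mem_Ici.mpr hyhρ) hlb
      have h2 : 1 / (1 + ε) < b ((s - τ) + τ) / b (s - τ) := hR₂ (s - τ) (by linarith)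
      have hbsτ : 0 < b (s - τ) := hb_pos _ (by linarith)
      rw [sub_add_cancel] at h2
      have h3 : b (s - τ) ≤ (1 + ε) * b s := by
        rw [div_lt_div_iff₀ (by linarith) hbsτ] at h2
        nlinarith
      linarith
  -- integrability
  have hNint : IntegrableOn (fun y => b ‖y + h‖) S := (hb_int.comp_add_right h).integrableOn
  have hDint : IntegrableOn (fun y : EuclideanSpace ℝ (Fin d) => b ‖y‖) S := hb_int.integrableOn
  set D : ℝ := ∫ y in S, b ‖y‖ with hDdef
  set N : ℝ := ∫ y in S, b ‖y + h‖ with hNdef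
  -- D > 0
  have hSvol : 0 < volume S := by
    have hset : S = (MeasurableEquiv.toLp 2 (Fin d → ℝ)).symm ⁻¹'
        (Set.pi Set.univ fun j => Set.Ici (x j)) := by
      ext y
      simp only [hSdef, Set.mem_preimage, Set.mem_pi,
        Set.mem_univ, forall_true_left, Set.mem_setOf_eq, Set.mem_Ici]
      rfl
    rw [hset, (EuclideanSpace.volume_preserving_symm_measurableEquiv_toLp (Fin d)).measure_preimage
      (MeasurableSet.univ_pi fun j => measurableSet_Ici).nullMeasurableSet]
    rw [volume_pi_pi]
    simp only [Real.volume_Ici]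
    rw [Finset.prod_const, pos_iff_ne_zero]
    exact pow_ne_zero _ (by simp)
  have hDpos : 0 < D := by
    rw [hDdef]
    rw [setIntegral_pos_iff_support_of_nonneg_ae ?_ hDint]
    · have : Function.support (fun y : EuclideanSpace ℝ (Fin d) => b ‖y‖) = Set.univ := by
        ext y; simp [Function.mem_support, ne_of_gt (hb_pos ‖y‖ (norm_nonneg y))]
      rw [this, Set.univ_inter]
      exact hSvol
    · filter_upwards with y
      exact (hb_pos ‖y‖ (norm_nonneg y)).le
  -- integral bounds
  have hNlow : (1 - ε) * D ≤ N := by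
    rw [hDdef, ← integral_const_mul]
    exact setIntegral_mono_on (hDint.const_mul _) hNint hSmeas (fun y hy => (hpt y hy).1)
  have hNup : N ≤ (1 + ε) * D := by
    rw [hDdef, ← integral_const_mul]
    exact setIntegral_mono_on hNint (hDint.const_mul _) hSmeas (fun y hy => (hpt y hy).2)
  -- conclude
  rw [← htrans]
  rw [abs_le]
  constructor
  · have : 1 - ε ≤ N / D := (le_div_iff₀ hDpos).mpr hNlow
    linarith
  · have : N / D ≤ 1 + ε := (div_le_iff₀ hDpos).mpr hNup
    linarith
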